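/- Fix integers n ≥ 1, m ≥ 1, k ≥ 1, and let V_{i,j} : ℂⁿ → ℂ (1 ≤ i ≤ n, 1 ≤ j ≤ m) be polynomial functions of degree at most k. Let Ω = {x ∈ ℂⁿ : x_1 ≠ 0} and define the holomorphic map Φ : Ω × ℂᵐ → ℂⁿ × ℂᵐ by Φ(x,t) = ((1/x_1, x_2/x_1, …, x_n/x_1), x_1^k t). Then there exists a polynomial map W : ℂⁿ × ℂᵐ → ℂⁿ × ℂᵐ (each component a polynomial in the n+m complex variables) such that: (i) for every (x,t) ∈ Ω × ℂᵐ, the Fréchet derivative of Φ at (x,t) applied to the vector V(x,t) = ((Σ_{j=1}^m t_j V_{1,j}(x), …, Σ_{j=1}^m t_j V_{n,j}(x)), 0) equals W(Φ(x,t)); and (ii) W(x', t') = 0 whenever x'_1 = 0 or t' = 0. -/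

import Mathlib

/-- The projective coordinate change on the affine chart `{x : x₁ ≠ 0}`. -/
noncomputable def projCoordChange (n : ℕ) [NeZero n] (x : Fin n → ℂ) : Fin n → ℂ :=
  fun i => if i = 0 then (x 0)⁻¹ else x i / x 0

/-- The coordinate change combined with the rank-`m` bundle transition `t ↦ x₁ᵏ t`. -/
noncomputable def bundleChange (n m k : ℕ) [NeZero n] (p : (Fin n → ℂ) × (Fin m → ℂ)) :
    (Fin n → ℂ) × (Fin m → ℂ) :=
  (projCoordChange n p.1, (p.1 0) ^ k • p.2)

open MvPolynomial in
open MvPolynomial Finsupp in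
noncomputable def homogK (n k : ℕ) [NeZero n] (p : MvPolynomial (Fin n) ℂ) :
    MvPolynomial (Fin n) ℂ :=
  (AddMonoidAlgebra.coeff p).sum fun d c => monomial (Finsupp.update d 0 (k - ∑ i, d i)) c

open MvPolynomial in
lemma eval_homogK (n k : ℕ) [NeZero n] (p : MvPolynomial (Fin n) ℂ)
    (hp : p.totalDegree ≤ k) (x : Fin n → ℂ) (hx : x 0 ≠ 0) :
    eval (projCoordChange n x) (homogK n k p) = (x 0)⁻¹ ^ k * eval x p := by
  rw [homogK, MvPolynomial.sum_def, map_sum, eval_eq' x p, Finset.mul_sum]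
  refine Finset.sum_congr rfl fun d hd => ?_
  have hD : (∑ i, d i) ≤ k := by
    refine le_trans (le_of_eq ?_) (le_trans (le_totalDegree hd) hp)
    rw [Finsupp.sum_fintype _ _ (fun i => rfl)]
  have hd0 : d 0 ≤ ∑ i, d i := Finset.single_le_sum (fun i _ => Nat.zero_le _) (Finset.mem_univ 0)
  rw [eval_monomial, Finsupp.prod_pow]
  show MvPolynomial.coeff d p * _ = _
  have key : ∀ i, (projCoordChange n x i) ^ (Finsupp.update d 0 (k - ∑ i, d i)) i =
      (if i = 0 then (x 0)⁻¹ ^ (k - ∑ i, d i) else (x i * (x 0)⁻¹) ^ d i) := by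
    intro i
    by_cases hi : i = 0 <;>
      simp [projCoordChange, hi, Finsupp.coe_update, Function.update, div_eq_mul_inv]
  rw [Finset.prod_congr rfl (fun i _ => key i)]
  rw [← Finset.mul_prod_erase Finset.univ _ (Finset.mem_univ (0 : Fin n))]
  rw [if_pos rfl]
  have herase : ∀ i ∈ Finset.univ.erase (0 : Fin n),
      (if i = 0 then (x 0)⁻¹ ^ (k - ∑ i, d i) else (x i * (x 0)⁻¹) ^ d i)
        = x i ^ d i * (x 0)⁻¹ ^ d i := by
    intro i hi
    rw [if_neg (Finset.mem_erase.1 hi).1, mul_pow]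
  rw [Finset.prod_congr rfl herase, Finset.prod_mul_distrib, Finset.prod_pow_eq_pow_sum]
  have hsum : ∑ i ∈ Finset.univ.erase (0 : Fin n), d i = (∑ i, d i) - d 0 := by
    have h := Finset.add_sum_erase Finset.univ (⇑d) (Finset.mem_univ (0 : Fin n))
    omega
  rw [hsum]
  have hx0 : ∏ i : Fin n, x i ^ d i
      = x 0 ^ d 0 * ∏ i ∈ Finset.univ.erase (0 : Fin n), x i ^ d i :=
    (Finset.mul_prod_erase Finset.univ _ (Finset.mem_univ (0 : Fin n))).symm
  rw [hx0]
  have hpows : (x 0)⁻¹ ^ (k - ∑ i, d i) * (x 0)⁻¹ ^ ((∑ i, d i) - d 0)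
      = (x 0)⁻¹ ^ k * x 0 ^ d 0 := by
    rw [← pow_add]
    have h1 : (k - ∑ i, d i) + ((∑ i, d i) - d 0) = k - d 0 := by omega
    rw [h1]
    have h2 : (x 0)⁻¹ ^ k = (x 0)⁻¹ ^ (k - d 0) * (x 0)⁻¹ ^ d 0 := by
      rw [← pow_add]; congr 1; omega
    rw [h2, mul_assoc, ← mul_pow, inv_mul_cancel₀ hx, one_pow, mul_one]
  linear_combination (MvPolynomial.coeff d p * ∏ i ∈ Finset.univ.erase (0:Fin n), x i ^ d i) * hpows

open ContinuousLinearMap in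
lemma fderiv_bundleChange_apply (n m k : ℕ) [NeZero n] [NeZero m]
    (x : Fin n → ℂ) (t : Fin m → ℂ) (hx : x 0 ≠ 0) (v : Fin n → ℂ) :
    fderiv ℂ (bundleChange n m k) (x, t) (v, (0 : Fin m → ℂ)) =
      ((fun i => if i = 0 then v 0 * -(x 0 ^ 2)⁻¹
                 else x i * (v 0 * -(x 0 ^ 2)⁻¹) + (x 0)⁻¹ * v i),
       fun j => (k * x 0 ^ (k - 1) * v 0) * t j) := by
  set P := (Fin n → ℂ) × (Fin m → ℂ)
  let e0 : P →L[ℂ] ℂ := (proj 0).comp (fst ℂ (Fin n → ℂ) (Fin m → ℂ))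
  let Ei : Fin n → (P →L[ℂ] ℂ) := fun i => (proj i).comp (fst ℂ (Fin n → ℂ) (Fin m → ℂ))
  have h0 : HasFDerivAt (fun p : P => p.1 0) e0 (x, t) := e0.hasFDerivAt
  let Dinv : P →L[ℂ] ℂ := (smulRight (1 : ℂ →L[ℂ] ℂ) (-(x 0 ^ 2)⁻¹)).comp e0
  have hinv : HasFDerivAt (fun p : P => (p.1 0)⁻¹) Dinv (x, t) :=
    (hasFDerivAt_inv hx).comp (x, t) h0
  let φ' : Fin n → (P →L[ℂ] ℂ) := fun i =>
    if i = 0 then Dinv else x i • Dinv + (x 0)⁻¹ • Ei i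
  have h1 : HasFDerivAt (fun p : P => projCoordChange n p.1)
      (ContinuousLinearMap.pi φ') (x, t) := by
    apply hasFDerivAt_pi''
    intro i
    rw [ContinuousLinearMap.proj_pi]
    by_cases hi : i = 0
    · subst hi
      simp only [projCoordChange, if_pos rfl, φ']
      exact hinv
    · simp only [projCoordChange, if_neg hi, div_eq_mul_inv, φ']
      exact ((Ei i).hasFDerivAt).mul hinv
  have hpow : HasFDerivAt (fun p : P => (p.1 0) ^ k)
      ((k * x 0 ^ (k - 1)) • e0) (x, t) :=
    (hasDerivAt_pow k (x 0)).comp_hasFDerivAt (x, t) h0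
  have h2 : HasFDerivAt (fun p : P => (p.1 0) ^ k • p.2)
      (((x 0) ^ k) • (snd ℂ (Fin n → ℂ) (Fin m → ℂ)) +
        ((k * x 0 ^ (k - 1)) • e0).smulRight t) (x, t) :=
    hpow.smul (snd ℂ (Fin n → ℂ) (Fin m → ℂ)).hasFDerivAt
  have H : HasFDerivAt (bundleChange n m k) _ (x, t) := h1.prodMk h2
  rw [H.fderiv]
  refine Prod.ext ?_ ?_
  · funext i
    by_cases hi : i = 0 <;>
      simp [hi, φ', Dinv, e0, Ei, smul_eq_mul]
  · funext j
    simp [e0, smul_eq_mul]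


open MvPolynomial in
/-- Chart-level content of Lemma 2.2, general `m`: the horizontal vector field
`V(x,t) = ∑ᵢ ∑ⱼ tⱼ V_{i,j}(x) ∂ₓᵢ`, pushed forward by
`Φ(x,t) = ((1/x₁, x₂/x₁, …, xₙ/x₁), x₁ᵏ t)`, extends to a polynomial vector field `W`
on `ℂⁿ × ℂᵐ` vanishing on `{x'₁ = 0}` and on `{t' = 0}`. -/
theorem extends_to_polynomial_field (n m k : ℕ) [NeZero n] [NeZero m] (hk : 1 ≤ k)
    (V : Fin n → Fin m → (Fin n → ℂ) → ℂ)
    (hV : ∀ i j, ∃ p : MvPolynomial (Fin n) ℂ,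
      p.totalDegree ≤ k ∧ ∀ x, V i j x = MvPolynomial.eval x p) :
    ∃ W : (Fin n → ℂ) × (Fin m → ℂ) → (Fin n → ℂ) × (Fin m → ℂ),
      (∃ Q : Fin n → MvPolynomial (Fin n ⊕ Fin m) ℂ,
       ∃ Qt : Fin m → MvPolynomial (Fin n ⊕ Fin m) ℂ,
        ∀ p : (Fin n → ℂ) × (Fin m → ℂ),
          W p = (fun i => MvPolynomial.eval (Sum.elim p.1 p.2) (Q i),
                 fun j => MvPolynomial.eval (Sum.elim p.1 p.2) (Qt j))) ∧
      (∀ (x : Fin n → ℂ) (t : Fin m → ℂ), x 0 ≠ 0 →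
        fderiv ℂ (bundleChange n m k) (x, t)
            ((fun i => ∑ j, t j * V i j x), (0 : Fin m → ℂ)) =
          W (bundleChange n m k (x, t))) ∧
      (∀ (x' : Fin n → ℂ) (t' : Fin m → ℂ), x' 0 = 0 ∨ t' = 0 → W (x', t') = 0) := by
  choose P hPdeg hPval using hV
  set A : Fin n → MvPolynomial (Fin n ⊕ Fin m) ℂ := fun i =>
    ∑ j, X (Sum.inr j) * rename Sum.inl (homogK n k (P i j)) with hA
  set Q : Fin n → MvPolynomial (Fin n ⊕ Fin m) ℂ := fun i =>
    if i = 0 then -(X (Sum.inl 0)) ^ 2 * A 0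
    else X (Sum.inl 0) * (A i - X (Sum.inl i) * A 0) with hQ
  set Qt : Fin m → MvPolynomial (Fin n ⊕ Fin m) ℂ := fun j =>
    C (k : ℂ) * (X (Sum.inl 0) * (X (Sum.inr j) * A 0)) with hQt
  refine ⟨fun p => (fun i => eval (Sum.elim p.1 p.2) (Q i),
                    fun j => eval (Sum.elim p.1 p.2) (Qt j)), ⟨Q, Qt, fun p => rfl⟩, ?_, ?_⟩
  · intro x t hx
    rw [fderiv_bundleChange_apply n m k x t hx]
    have hy0 : projCoordChange n x 0 = (x 0)⁻¹ := by simp [projCoordChange]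
    have hyi : ∀ i : Fin n, i ≠ 0 → projCoordChange n x i = x i / x 0 := by
      intro i hi; simp [projCoordChange, hi]
    have hs : ∀ j, (x 0 ^ k • t) j = x 0 ^ k * t j := fun j => rfl
    have hAeval : ∀ i, eval (Sum.elim (projCoordChange n x) (x 0 ^ k • t)) (A i)
        = ∑ j, t j * V i j x := by
      intro i
      rw [hA]
      simp only [map_sum, map_mul, eval_X, Sum.elim_inr, eval_rename]
      refine Finset.sum_congr rfl fun j _ => ?_
      have hcomp : (Sum.elim (projCoordChange n x) (x 0 ^ k • t)) ∘ Sum.inl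
          = projCoordChange n x := rfl
      rw [hcomp, eval_homogK n k _ (hPdeg i j) x hx, hs j, ← hPval i j x]
      have hxinv : x 0 ^ k * (x 0)⁻¹ ^ k = 1 := by rw [← mul_pow, mul_inv_cancel₀ hx, one_pow]
      linear_combination (t j * V i j x) * hxinv
    have hv : ∀ i, eval (Sum.elim (projCoordChange n x) (x 0 ^ k • t)) (A i)
        = ∑ j, t j * V i j x := hAeval
    show _ = (fun i => eval (Sum.elim (projCoordChange n x) (x 0 ^ k • t)) (Q i),
              fun j => eval (Sum.elim (projCoordChange n x) (x 0 ^ k • t)) (Qt j))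
    refine Prod.ext ?_ ?_
    · funext i
      by_cases hi : i = 0
      · subst hi
        simp only [hQ, if_pos rfl, map_mul, map_neg, map_pow, eval_X, Sum.elim_inl, hy0, hv,
          if_pos rfl]
        simp only [↓reduceIte]
        ring
      · simp only [hQ, if_neg hi, map_mul, map_sub, eval_X, Sum.elim_inl, hy0, hyi i hi, hv,
          if_neg hi]
        field_simp
        ring
    · funext j
      simp only [hQt, map_mul, eval_C, eval_X, Sum.elim_inl, Sum.elim_inr, hy0, hv, hs j]
      have hxk : x 0 ^ k = x 0 * x 0 ^ (k - 1) := by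
        rw [← pow_succ']; congr 1; omega
      field_simp [hxk]
      rw [hxk]; ring
  · intro x' t' h
    have hA0 : t' = 0 → ∀ i, eval (Sum.elim x' t') (A i) = 0 := by
      intro h i; subst h; simp [hA]
    have hzQ : ∀ i, eval (Sum.elim x' t') (Q i) = 0 := by
      intro i
      rcases h with h | h
      · by_cases hi : i = 0 <;> simp [hQ, hi, h]
      · by_cases hi : i = 0 <;> simp [hQ, hi, hA0 h]
    have hzQt : ∀ j, eval (Sum.elim x' t') (Qt j) = 0 := by
      intro j
      rcases h with h | h
      · simp [hQt, h]
      · simp [hQt, hA0 h]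
    refine Prod.ext ?_ ?_
    · funext i; exact hzQ i
    · funext j; exact hzQt j
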